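/- Let G be an (additively written) abelian group and let c : G × G → ℂ^× be a function satisfying: (i) c(0,h) = 1 for all h ∈ G; (ii) c(g,h) = c(h,g) for all g,h ∈ G (symmetry); and (iii) the 2-cocycle identity c(g,h)·c(g+h,k) = c(h,k)·c(g,h+k) for all g,h,k ∈ G. Then there exists a function f : G → ℂ^× with f(0) = 1 such that c(g,h) = f(g)·f(h)·f(g+h)^{−1} for all g,h ∈ G; that is, every symmetric normalized 2-cocycle on G with values in ℂ^× is a coboundary. -/

import Mathlib

open CategoryTheory

set_option linter.unusedVariables false

noncomputable instance : RootableBy ℂˣ ℕ :=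
  rootableByOfPowLeftSurj _ _ (fun {n} hn x => by
    obtain ⟨z, hz⟩ := IsAlgClosed.exists_pow_nat_eq (x : ℂ) (Nat.pos_of_ne_zero hn)
    have hz0 : z ≠ 0 := by
      intro h
      apply x.ne_zero
      rw [← hz, h, zero_pow hn]
    refine ⟨Units.mk0 z hz0, ?_⟩
    ext
    simpa using hz)

noncomputable instance : RootableBy ℂˣ ℤ := Group.rootableByIntOfRootableByNat ℂˣ

noncomputable instance : DivisibleBy (Additive ℂˣ) ℤ where
  div a n := Additive.ofMul (RootableBy.root a.toMul n)
  div_zero a := congrArg Additive.ofMul (RootableBy.root_zero _)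
  div_cancel {n} a hn := congrArg Additive.ofMul (RootableBy.root_cancel (α := ℤ) a.toMul hn)

noncomputable instance : DivisibleBy (ULift.{u} (Additive ℂˣ)) ℤ where
  div a n := ULift.up (DivisibleBy.div a.down n)
  div_zero a := congrArg ULift.up (DivisibleBy.div_zero a.down)
  div_cancel {n} a hn := congrArg ULift.up (DivisibleBy.div_cancel (α := ℤ) a.down hn)

/-- Extension of `G` by `ℂˣ` determined by the cocycle `c`. -/
def CocycleExt {G : Type u} (_c : G → G → ℂˣ) : Type u := G × ULift.{u} (Additive ℂˣ)

instance {G : Type u} [AddCommGroup G] (c : G → G → ℂˣ) : Add (CocycleExt c) :=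
  ⟨fun x y => (x.1 + y.1, ULift.up (x.2.down + y.2.down + Additive.ofMul (c x.1 y.1)))⟩

instance {G : Type u} [AddCommGroup G] (c : G → G → ℂˣ) : Zero (CocycleExt c) :=
  ⟨((0 : G), ULift.up 0)⟩

instance {G : Type u} [AddCommGroup G] (c : G → G → ℂˣ) : Neg (CocycleExt c) :=
  ⟨fun x => (-x.1, ULift.up (-x.2.down - Additive.ofMul (c x.1 (-x.1))))⟩

def cocycleExtGroup {G : Type u} [AddCommGroup G] (c : G → G → ℂˣ)
    (hnorm : ∀ h : G, c 0 h = 1)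
    (hsymm : ∀ g h : G, c g h = c h g)
    (hcocycle : ∀ g h k : G, c g h * c (g + h) k = c h k * c g (h + k)) :
    AddCommGroup (CocycleExt c) where
  add := (· + ·)
  zero := 0
  neg := Neg.neg
  add_assoc x y z := by
    obtain ⟨x1, x2⟩ := x; obtain ⟨y1, y2⟩ := y; obtain ⟨z1, z2⟩ := z
    refine Prod.ext (add_assoc x1 y1 z1) (congrArg ULift.up ?_)
    show x2.down + y2.down + Additive.ofMul (c x1 y1) + z2.down
        + Additive.ofMul (c (x1 + y1) z1)
      = x2.down + (y2.down + z2.down + Additive.ofMul (c y1 z1))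
        + Additive.ofMul (c x1 (y1 + z1))
    have key : Additive.ofMul (c x1 y1) + Additive.ofMul (c (x1 + y1) z1)
        = Additive.ofMul (c y1 z1) + Additive.ofMul (c x1 (y1 + z1)) :=
      congrArg Additive.ofMul (hcocycle x1 y1 z1)
    calc x2.down + y2.down + Additive.ofMul (c x1 y1) + z2.down
          + Additive.ofMul (c (x1 + y1) z1)
        = x2.down + y2.down + z2.down
          + (Additive.ofMul (c x1 y1) + Additive.ofMul (c (x1 + y1) z1)) := by abel
      _ = x2.down + y2.down + z2.down
          + (Additive.ofMul (c y1 z1) + Additive.ofMul (c x1 (y1 + z1))) := by rw [key]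
      _ = x2.down + (y2.down + z2.down + Additive.ofMul (c y1 z1))
          + Additive.ofMul (c x1 (y1 + z1)) := by abel
  zero_add x := by
    obtain ⟨x1, x2⟩ := x
    refine Prod.ext (zero_add x1) (congrArg ULift.up ?_)
    show (0 : Additive ℂˣ) + x2.down + Additive.ofMul (c 0 x1) = x2.down
    rw [hnorm]
    show (0 : Additive ℂˣ) + x2.down + 0 = x2.down
    abel
  add_zero x := by
    obtain ⟨x1, x2⟩ := x
    refine Prod.ext (add_zero x1) (congrArg ULift.up ?_)
    show x2.down + (0 : Additive ℂˣ) + Additive.ofMul (c x1 0) = x2.down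
    rw [hsymm, hnorm]
    show x2.down + (0 : Additive ℂˣ) + 0 = x2.down
    abel
  neg_add_cancel x := by
    obtain ⟨x1, x2⟩ := x
    refine Prod.ext (neg_add_cancel x1) (congrArg ULift.up ?_)
    show -x2.down - Additive.ofMul (c x1 (-x1)) + x2.down
        + Additive.ofMul (c (-x1) x1) = 0
    rw [hsymm (-x1) x1]
    abel
  add_comm x y := by
    obtain ⟨x1, x2⟩ := x; obtain ⟨y1, y2⟩ := y
    refine Prod.ext (add_comm x1 y1) (congrArg ULift.up ?_)
    show x2.down + y2.down + Additive.ofMul (c x1 y1)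
      = y2.down + x2.down + Additive.ofMul (c y1 x1)
    rw [hsymm, add_comm x2.down]
  nsmul := nsmulRec
  zsmul := zsmulRec

theorem coboundary_aux (G : Type u) [AddCommGroup G] (c : G → G → ℂˣ)
    (hnorm : ∀ h : G, c 0 h = 1)
    (hsymm : ∀ g h : G, c g h = c h g)
    (hcocycle : ∀ g h k : G, c g h * c (g + h) k = c h k * c g (h + k)) :
    ∃ f : G → ℂˣ, f 0 = 1 ∧ ∀ g h : G, c g h = f g * f h * (f (g + h))⁻¹ := by
  letI : AddCommGroup (CocycleExt c) := cocycleExtGroup c hnorm hsymm hcocycle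
  let e : G → CocycleExt c := fun g => (g, ULift.up 0)
  let i : ULift.{u} (Additive ℂˣ) →+ CocycleExt c :=
    { toFun := fun a => ((0 : G), a)
      map_zero' := rfl
      map_add' := fun a b => by
        refine Prod.ext (zero_add (0 : G)).symm (congrArg ULift.up ?_)
        show a.down + b.down = a.down + b.down + Additive.ofMul (c 0 0)
        rw [hnorm]
        show a.down + b.down = a.down + b.down + 0
        abel }
  have hi : Function.Injective i := fun a b hab =>
    ULift.ext _ _ (congrArg ULift.down (congrArg Prod.snd hab))
  let I : AddCommGrpCat.{u} := AddCommGrpCat.of (ULift.{u} (Additive ℂˣ))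
  let EE : AddCommGrpCat.{u} := AddCommGrpCat.of (CocycleExt c)
  let ihom : I ⟶ EE := AddCommGrpCat.ofHom i
  haveI : Mono ihom := (AddCommGrpCat.mono_iff_injective _).mpr hi
  haveI hInj : Injective I := AddCommGrpCat.injective_of_divisible _
  let r : EE ⟶ I := Injective.factorThru (𝟙 I) ihom
  have hcomp : ihom ≫ r = 𝟙 I := Injective.comp_factorThru (𝟙 I) ihom
  have hr : ∀ a : ULift.{u} (Additive ℂˣ), r (i a) = a := fun a => by
    have := ConcreteCategory.congr_hom hcomp a
    exact this
  refine ⟨fun g => Additive.toMul ((r (e g)).down), ?_, ?_⟩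
  · show Additive.toMul ((r (e 0)).down) = 1
    have h0 : e 0 = (0 : CocycleExt c) := rfl
    rw [h0, map_zero]
    rfl
  · intro g h
    have key : (e g) + (e h)
        = (e (g + h)) + i (ULift.up (Additive.ofMul (c g h))) := by
      refine Prod.ext ?_ (congrArg ULift.up ?_)
      · show g + h = g + h + 0
        rw [add_zero]
      · show (0 : Additive ℂˣ) + 0 + Additive.ofMul (c g h)
          = 0 + Additive.ofMul (c g h) + Additive.ofMul (c (g + h) 0)
        rw [hsymm (g + h) 0, hnorm]
        show (0 : Additive ℂˣ) + 0 + Additive.ofMul (c g h)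
          = 0 + Additive.ofMul (c g h) + 0
        abel
    have hradd := congrArg (fun x : EE => (r x).down) key
    rw [map_add, map_add, hr] at hradd
    have hmul : Additive.toMul ((r (e g)).down
          + (r (e h)).down)
        = Additive.toMul ((r (e (g + h))).down
          + Additive.ofMul (c g h)) := by
      rw [show (r (e g)).down
            + (r (e h)).down
          = ((r (e g))
            + (r (e h))).down from rfl]
      rw [hradd]
      rfl
    simp only [toMul_add, toMul_ofMul] at hmul
    rw [mul_comm] at hmul
    show c g h = Additive.toMul ((r (e g)).down) * Additive.toMul ((r (e h)).down)
      * (Additive.toMul ((r (e (g + h))).down))⁻¹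
    rw [eq_mul_inv_iff_mul_eq, mul_comm, ← hmul, mul_comm]

theorem symmetric_normalized_two_cocycle_is_coboundary
    (G : Type*) [AddCommGroup G] (c : G → G → ℂˣ)
    (hnorm : ∀ h : G, c 0 h = 1)
    (hsymm : ∀ g h : G, c g h = c h g)
    (hcocycle : ∀ g h k : G, c g h * c (g + h) k = c h k * c g (h + k)) :
    ∃ f : G → ℂˣ, f 0 = 1 ∧ ∀ g h : G, c g h = f g * f h * (f (g + h))⁻¹ := by
  exact coboundary_aux G c hnorm hsymm hcocycle
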